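/- Let G be a connected cubic graph obtained from a 2-edge-connected cubic graph H on n vertices by inflating every vertex of H to a triangle and replacing each edge of H with a string of diamonds of positive length. If G satisfies Nebeský's inequality ec(G−X)+2·oc(G−X)−2 ≤ |X| for the set X of edges of G not on any triangle, then n ≤ 4. -/

import Mathlib

open SimpleGraph Finset

/-- Data witnessing that the cubic graph `G` is obtained from the cubic graph `H` by
inflating every vertex of `H` to a triangle and replacing each edge `e` of `H` by a
string of `k e` diamonds: `tri u` is the vertex-triangle at `u`, `dia e i`
(for `i < k e`) are the diamonds of the string at `e`, and `cross e` are the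
`k e + 1` connecting edges of the string at `e`. -/
structure DiamondInflation {VH VG : Type*} [Fintype VH] [Fintype VG]
    [DecidableEq VH] [DecidableEq VG]
    (H : SimpleGraph VH) (G : SimpleGraph VG) (k : Sym2 VH → ℕ) where
  tri : VH → Finset VG
  dia : Sym2 VH → ℕ → Finset VG
  cross : Sym2 VH → Finset (Sym2 VG)
  tri_card : ∀ u, (tri u).card = 3
  tri_adj : ∀ u, ∀ x ∈ tri u, ∀ y ∈ tri u, x ≠ y → G.Adj x y
  dia_card : ∀ e ∈ H.edgeSet, ∀ i < k e, (dia e i).card = 4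
  dia_edges : ∀ e ∈ H.edgeSet, ∀ i < k e,
    {f | f ∈ G.edgeSet ∧ ∀ v ∈ f, v ∈ (↑(dia e i) : Set VG)}.ncard = 5
  pieces_cover : ∀ x : VG,
    (∃ u, x ∈ tri u) ∨ (∃ e ∈ H.edgeSet, ∃ i < k e, x ∈ dia e i)
  tri_disj : ∀ u u', u ≠ u' → Disjoint (tri u) (tri u')
  dia_disj : ∀ e ∈ H.edgeSet, ∀ e' ∈ H.edgeSet, ∀ i < k e, ∀ j < k e',
    (e ≠ e' ∨ i ≠ j) → Disjoint (dia e i) (dia e' j)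
  tri_dia_disj : ∀ u, ∀ e ∈ H.edgeSet, ∀ i < k e, Disjoint (tri u) (dia e i)
  cross_card : ∀ e ∈ H.edgeSet, (cross e).card = k e + 1
  cross_sub : ∀ e ∈ H.edgeSet, (↑(cross e) : Set (Sym2 VG)) ⊆ G.edgeSet
  cross_ends : ∀ e ∈ H.edgeSet, ∀ f ∈ cross e, ∀ v ∈ f,
    (∃ u ∈ e, v ∈ tri u) ∨ (∃ i < k e, v ∈ dia e i)
  edge_classify : ∀ f ∈ G.edgeSet,
    (∃ u, ∀ v ∈ f, v ∈ tri u) ∨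
    (∃ e ∈ H.edgeSet, ∃ i < k e, ∀ v ∈ f, v ∈ dia e i) ∨
    (∃! e, e ∈ H.edgeSet ∧ f ∈ cross e)

/-- The Betti number (`|E| − |V| + 1`) of the connected component `c` of `Gr`. -/
noncomputable def compBetti {V : Type*} (Gr : SimpleGraph V)
    (c : Gr.ConnectedComponent) : ℤ :=
  ({e | e ∈ Gr.edgeSet ∧ ∀ v ∈ e, Gr.connectedComponentMk v = c}.ncard : ℤ)
    - c.supp.ncard + 1

namespace DiamondInflation
variable {VH VG : Type*} [Fintype VH] [Fintype VG] [DecidableEq VH] [DecidableEq VG]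
  {H : SimpleGraph VH} {G : SimpleGraph VG} {k : Sym2 VH → ℕ}
  (D : DiamondInflation H G k)

def IsPiece (S : Finset VG) : Prop :=
  (∃ u, S = D.tri u) ∨ (∃ e ∈ H.edgeSet, ∃ i < k e, S = D.dia e i)

lemma exists_piece (x : VG) : ∃ S, D.IsPiece S ∧ x ∈ S := by
  rcases D.pieces_cover x with ⟨u, hu⟩ | ⟨e, he, i, hi, hd⟩
  · exact ⟨D.tri u, Or.inl ⟨u, rfl⟩, hu⟩
  · exact ⟨D.dia e i, Or.inr ⟨e, he, i, hi, rfl⟩, hd⟩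

noncomputable def piece (x : VG) : Finset VG := (D.exists_piece x).choose

lemma isPiece_piece (x : VG) : D.IsPiece (D.piece x) := (D.exists_piece x).choose_spec.1

lemma mem_piece (x : VG) : x ∈ D.piece x := (D.exists_piece x).choose_spec.2

lemma piece_unique {S S' : Finset VG} (hS : D.IsPiece S) (hS' : D.IsPiece S') {x : VG}
    (h : x ∈ S) (h' : x ∈ S') : S = S' := by
  rcases hS with ⟨u, rfl⟩ | ⟨e, he, i, hi, rfl⟩ <;>
    rcases hS' with ⟨u', rfl⟩ | ⟨e', he', i', hi', rfl⟩
  · by_contra hne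
    have hUU : u ≠ u' := fun huu => hne (by rw [huu])
    exact Finset.disjoint_left.1 (D.tri_disj u u' hUU) h h'
  · exact absurd h' (Finset.disjoint_left.1 (D.tri_dia_disj u e' he' i' hi') h)
  · exact absurd h (Finset.disjoint_left.1 (D.tri_dia_disj u' e he i hi) h')
  · by_contra hne
    have : e ≠ e' ∨ i ≠ i' := by
      by_contra hc
      push_neg at hc
      exact hne (by rw [hc.1, hc.2])
    exact Finset.disjoint_left.1 (D.dia_disj e he e' he' i hi i' hi' this) h h'

lemma piece_eq_of_mem {S : Finset VG} {x : VG} (hS : D.IsPiece S) (h : x ∈ S) :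
    D.piece x = S :=
  D.piece_unique (D.isPiece_piece x) hS (D.mem_piece x) h

lemma mem_piece_iff {x y : VG} : y ∈ D.piece x ↔ D.piece y = D.piece x := by
  constructor
  · intro h
    exact D.piece_eq_of_mem (D.isPiece_piece x) h
  · intro h
    rw [← h]; exact D.mem_piece y

lemma piece_tri {u : VH} {x : VG} (hx : x ∈ D.tri u) : D.piece x = D.tri u :=
  D.piece_eq_of_mem (Or.inl ⟨u, rfl⟩) hx

lemma piece_dia {e : Sym2 VH} {i : ℕ} (he : e ∈ H.edgeSet) (hi : i < k e) {x : VG}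
    (hx : x ∈ D.dia e i) : D.piece x = D.dia e i :=
  D.piece_eq_of_mem (Or.inr ⟨e, he, i, hi, rfl⟩) hx

end DiamondInflation
namespace DiamondInflation
variable {VH VG : Type*} [Fintype VH] [Fintype VG] [DecidableEq VH] [DecidableEq VG]
  {H : SimpleGraph VH} {G : SimpleGraph VG} {k : Sym2 VH → ℕ}
  (D : DiamondInflation H G k) [DecidableRel G.Adj]

lemma dia_missing {e : Sym2 VH} {i : ℕ} (he : e ∈ H.edgeSet) (hi : i < k e)
    {a b c d : VG} (ha : a ∈ D.dia e i) (hb : b ∈ D.dia e i) (hc : c ∈ D.dia e i)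
    (hd : d ∈ D.dia e i) (hab : a ≠ b) (hcd : c ≠ d)
    (h1 : s(a,b) ∉ G.edgeSet) (h2 : s(c,d) ∉ G.edgeSet) : s(a,b) = s(c,d) := by
  by_contra hne
  classical
  have hcard4 : (D.dia e i).card = 4 := D.dia_card e he i hi
  set S := D.dia e i with hSdef
  set innerF : Finset (Sym2 VG) := G.edgeFinset.filter (fun f => ∀ v ∈ f, v ∈ S) with hIdef
  have hcard5 : innerF.card = 5 := by
    have h5 := D.dia_edges e he i hi
    have hset : {f | f ∈ G.edgeSet ∧ ∀ v ∈ f, v ∈ (↑(D.dia e i) : Set VG)} = ↑innerF := by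
      ext f
      simp [hIdef, SimpleGraph.mem_edgeFinset, hSdef]
    rw [hset, Set.ncard_coe_finset] at h5
    exact h5
  set allP : Finset (Sym2 VG) := S.offDiag.image Sym2.mk.uncurry with hAdef
  have hA6 : allP.card = 6 := by
    rw [hAdef, Sym2.card_image_offDiag, hcard4]
    decide
  have hmemA : ∀ {x y : VG}, x ∈ S → y ∈ S → x ≠ y → s(x,y) ∈ allP := by
    intro x y hx hy hxy
    exact Finset.mem_image.2 ⟨(x,y), Finset.mem_offDiag.2 ⟨hx, hy, hxy⟩, rfl⟩
  have hsub : innerF ⊆ (allP.erase s(a,b)).erase s(c,d) := by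
    intro f hf
    rw [hIdef, Finset.mem_filter, SimpleGraph.mem_edgeFinset] at hf
    obtain ⟨hfE, hfS⟩ := hf
    refine Finset.mem_erase.2 ⟨?_, Finset.mem_erase.2 ⟨?_, ?_⟩⟩
    · rintro rfl; exact h2 hfE
    · rintro rfl; exact h1 hfE
    · induction f with
      | _ x y =>
        exact hmemA (hfS x (Sym2.mem_mk_left x y)) (hfS y (Sym2.mem_mk_right x y))
          (G.mem_edgeSet.1 hfE).ne
  have h1m : s(a,b) ∈ allP := hmemA ha hb hab
  have h2m : s(c,d) ∈ allP.erase s(a,b) :=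
    Finset.mem_erase.2 ⟨fun h => hne h.symm, hmemA hc hd hcd⟩
  have hle := Finset.card_le_card hsub
  rw [Finset.card_erase_of_mem h2m, Finset.card_erase_of_mem h1m, hA6, hcard5] at hle
  omega

lemma dia_no_two_missing {e : Sym2 VH} {i : ℕ} (he : e ∈ H.edgeSet) (hi : i < k e)
    {x p q : VG} (hx : x ∈ D.dia e i) (hp : p ∈ D.dia e i) (hq : q ∈ D.dia e i)
    (hxp : x ≠ p) (hxq : x ≠ q) (hpq : p ≠ q)
    (h1 : s(x,p) ∉ G.edgeSet) (h2 : s(x,q) ∉ G.edgeSet) : False := by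
  have h := D.dia_missing he hi hx hp hx hq hxp hxq h1 h2
  rw [Sym2.eq_iff] at h
  rcases h with ⟨-, h⟩ | ⟨h, -⟩
  · exact hpq h
  · exact hxq h

lemma dia_two_adj {e : Sym2 VH} {i : ℕ} (he : e ∈ H.edgeSet) (hi : i < k e)
    {x : VG} (hx : x ∈ D.dia e i) :
    ∃ y z, y ∈ D.dia e i ∧ z ∈ D.dia e i ∧ y ≠ z ∧ G.Adj x y ∧ G.Adj x z := by
  have hcard4 : (D.dia e i).card = 4 := D.dia_card e he i hi
  have h3 : ((D.dia e i).erase x).card = 3 := by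
    rw [Finset.card_erase_of_mem hx, hcard4]
  obtain ⟨b, c, d, hbc, hbd, hcd, hset⟩ := Finset.card_eq_three.1 h3
  have hb : b ∈ (D.dia e i).erase x := by rw [hset]; simp
  have hc : c ∈ (D.dia e i).erase x := by rw [hset]; simp
  have hd : d ∈ (D.dia e i).erase x := by rw [hset]; simp
  obtain ⟨hbx, hbS⟩ := Finset.mem_erase.1 hb
  obtain ⟨hcx, hcS⟩ := Finset.mem_erase.1 hc
  obtain ⟨hdx, hdS⟩ := Finset.mem_erase.1 hd
  by_cases h1 : s(x,b) ∈ G.edgeSet <;> by_cases h2 : s(x,c) ∈ G.edgeSet <;>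
    by_cases h4 : s(x,d) ∈ G.edgeSet
  · exact ⟨b, c, hbS, hcS, hbc, G.mem_edgeSet.1 h1, G.mem_edgeSet.1 h2⟩
  · exact ⟨b, c, hbS, hcS, hbc, G.mem_edgeSet.1 h1, G.mem_edgeSet.1 h2⟩
  · exact ⟨b, d, hbS, hdS, hbd, G.mem_edgeSet.1 h1, G.mem_edgeSet.1 h4⟩
  · exact absurd (D.dia_no_two_missing he hi hx hcS hdS (Ne.symm hcx) (Ne.symm hdx) hcd h2 h4) id
  · exact ⟨c, d, hcS, hdS, hcd, G.mem_edgeSet.1 h2, G.mem_edgeSet.1 h4⟩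
  · exact absurd (D.dia_no_two_missing he hi hx hbS hdS (Ne.symm hbx) (Ne.symm hdx) hbd h1 h4) id
  · exact absurd (D.dia_no_two_missing he hi hx hbS hcS (Ne.symm hbx) (Ne.symm hcx) hbc h1 h2) id
  · exact absurd (D.dia_no_two_missing he hi hx hbS hcS (Ne.symm hbx) (Ne.symm hcx) hbc h1 h2) id

lemma dia_edge_triangle {e : Sym2 VH} {i : ℕ} (he : e ∈ H.edgeSet) (hi : i < k e)
    {x y : VG} (hx : x ∈ D.dia e i) (hy : y ∈ D.dia e i) (hadj : G.Adj x y) :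
    ∃ z, G.Adj x z ∧ G.Adj y z := by
  have hxy : x ≠ y := hadj.ne
  have hcard4 : (D.dia e i).card = 4 := D.dia_card e he i hi
  have hyy : y ∈ (D.dia e i).erase x := Finset.mem_erase.2 ⟨Ne.symm hxy, hy⟩
  have h2c : (((D.dia e i).erase x).erase y).card = 2 := by
    rw [Finset.card_erase_of_mem hyy, Finset.card_erase_of_mem hx, hcard4]
  obtain ⟨c, d, hcd, hset⟩ := Finset.card_eq_two.1 h2c
  have hc : c ∈ ((D.dia e i).erase x).erase y := by rw [hset]; simp
  have hd : d ∈ ((D.dia e i).erase x).erase y := by rw [hset]; simp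
  obtain ⟨hcy, hc'⟩ := Finset.mem_erase.1 hc
  obtain ⟨hcx, hcS⟩ := Finset.mem_erase.1 hc'
  obtain ⟨hdy, hd'⟩ := Finset.mem_erase.1 hd
  obtain ⟨hdx, hdS⟩ := Finset.mem_erase.1 hd'
  by_cases h1 : s(x,c) ∈ G.edgeSet
  · by_cases h2 : s(y,c) ∈ G.edgeSet
    · exact ⟨c, G.mem_edgeSet.1 h1, G.mem_edgeSet.1 h2⟩
    · by_cases h3 : s(x,d) ∈ G.edgeSet
      · by_cases h4 : s(y,d) ∈ G.edgeSet
        · exact ⟨d, G.mem_edgeSet.1 h3, G.mem_edgeSet.1 h4⟩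
        · have h := D.dia_missing he hi hy hcS hy hdS (Ne.symm hcy) (Ne.symm hdy) h2 h4
          rw [Sym2.eq_iff] at h
          rcases h with ⟨-, h⟩ | ⟨h, -⟩
          · exact absurd h hcd
          · exact absurd h (Ne.symm hdy)
      · have h := D.dia_missing he hi hy hcS hx hdS (Ne.symm hcy) (Ne.symm hdx) h2 h3
        rw [Sym2.eq_iff] at h
        rcases h with ⟨h, h'⟩ | ⟨h, h'⟩
        · exact absurd h' hcd
        · exact absurd h' hcx
  · by_cases h3 : s(x,d) ∈ G.edgeSet
    · by_cases h4 : s(y,d) ∈ G.edgeSet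
      · exact ⟨d, G.mem_edgeSet.1 h3, G.mem_edgeSet.1 h4⟩
      · have h := D.dia_missing he hi hx hcS hy hdS (Ne.symm hcx) (Ne.symm hdy) h1 h4
        rw [Sym2.eq_iff] at h
        rcases h with ⟨h, h'⟩ | ⟨h, h'⟩
        · exact absurd h hxy
        · exact absurd h' hcy
    · have h := D.dia_missing he hi hx hcS hx hdS (Ne.symm hcx) (Ne.symm hdx) h1 h3
      rw [Sym2.eq_iff] at h
      rcases h with ⟨-, h⟩ | ⟨h, -⟩
      · exact absurd h hcd
      · exact absurd h (Ne.symm hdx)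

end DiamondInflation
namespace DiamondInflation
variable {VH VG : Type*} [Fintype VH] [Fintype VG] [DecidableEq VH] [DecidableEq VG]
  {H : SimpleGraph VH} {G : SimpleGraph VG} {k : Sym2 VH → ℕ}
  (D : DiamondInflation H G k) [DecidableRel G.Adj]

lemma two_inside (x : VG) :
    ∃ y z, y ≠ z ∧ y ∈ D.piece x ∧ z ∈ D.piece x ∧ G.Adj x y ∧ G.Adj x z := by
  rcases D.isPiece_piece x with ⟨u, hu⟩ | ⟨e, he, i, hi, hS⟩
  · have hx : x ∈ D.tri u := hu ▸ D.mem_piece x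
    have h2 : ((D.tri u).erase x).card = 2 := by
      rw [Finset.card_erase_of_mem hx, D.tri_card u]
    obtain ⟨y, z, hyz, hset⟩ := Finset.card_eq_two.1 h2
    have hy : y ∈ (D.tri u).erase x := by rw [hset]; simp
    have hz : z ∈ (D.tri u).erase x := by rw [hset]; simp
    obtain ⟨hyx, hyS⟩ := Finset.mem_erase.1 hy
    obtain ⟨hzx, hzS⟩ := Finset.mem_erase.1 hz
    exact ⟨y, z, hyz, hu ▸ hyS, hu ▸ hzS,
      D.tri_adj u x hx y hyS (Ne.symm hyx), D.tri_adj u x hx z hzS (Ne.symm hzx)⟩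
  · have hx : x ∈ D.dia e i := hS ▸ D.mem_piece x
    obtain ⟨y, z, hyS, hzS, hyz, ha1, ha2⟩ := D.dia_two_adj he hi hx
    exact ⟨y, z, hyz, hS ▸ hyS, hS ▸ hzS, ha1, ha2⟩

lemma not_two_outside (hGcubic : ∀ v, G.degree v = 3) {x b c : VG}
    (hb : G.Adj x b) (hc : G.Adj x c) (hbc : b ≠ c)
    (hbp : b ∉ D.piece x) (hcp : c ∉ D.piece x) : False := by
  obtain ⟨y, z, hyz, hyP, hzP, hay, haz⟩ := D.two_inside x
  have hsub : ({y, z, b, c} : Finset VG) ⊆ G.neighborFinset x := by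
    intro w hw
    simp only [Finset.mem_insert, Finset.mem_singleton] at hw
    rw [SimpleGraph.mem_neighborFinset]
    rcases hw with rfl | rfl | rfl | rfl
    exacts [hay, haz, hb, hc]
  have hc2 : ({b, c} : Finset VG).card = 2 := by
    rw [Finset.card_insert_of_notMem (by simp [hbc]), Finset.card_singleton]
  have hc3 : ({z, b, c} : Finset VG).card = 3 := by
    rw [Finset.card_insert_of_notMem, hc2]
    simp only [Finset.mem_insert, Finset.mem_singleton]
    push_neg
    exact ⟨fun h => hbp (h ▸ hzP), fun h => hcp (h ▸ hzP)⟩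
  have hc4 : ({y, z, b, c} : Finset VG).card = 4 := by
    rw [Finset.card_insert_of_notMem, hc3]
    simp only [Finset.mem_insert, Finset.mem_singleton]
    push_neg
    exact ⟨hyz, fun h => hbp (h ▸ hyP), fun h => hcp (h ▸ hyP)⟩
  have hle := Finset.card_le_card hsub
  rw [hc4, SimpleGraph.card_neighborFinset_eq_degree, hGcubic] at hle
  omega

lemma triangle_same_piece (hGcubic : ∀ v, G.degree v = 3) {a b c : VG}
    (hab : G.Adj a b) (hbc : G.Adj b c) (hac : G.Adj a c) :
    D.piece a = D.piece b := by
  by_contra hne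
  have hbpa : b ∉ D.piece a := fun h => hne (D.mem_piece_iff.1 h).symm
  have hapb : a ∉ D.piece b := fun h => hne (D.mem_piece_iff.1 h)
  have hca : c ∈ D.piece a := by
    by_contra hcc
    exact D.not_two_outside hGcubic hab hac hbc.ne hbpa hcc
  have hcb : c ∈ D.piece b := by
    by_contra hcc
    exact D.not_two_outside hGcubic hab.symm hbc hac.ne hapb hcc
  exact hne ((D.mem_piece_iff.1 hca).symm.trans (D.mem_piece_iff.1 hcb))

lemma edge_triangle {x y : VG} (hadj : G.Adj x y) (hp : D.piece x = D.piece y) :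
    ∃ a b c : VG, G.Adj a b ∧ G.Adj b c ∧ G.Adj a c ∧
      s(x,y) ∈ ({s(a,b), s(b,c), s(a,c)} : Set (Sym2 VG)) := by
  have hyx : y ∈ D.piece x := D.mem_piece_iff.2 hp.symm
  rcases D.isPiece_piece x with ⟨u, hu⟩ | ⟨e, he, i, hi, hS⟩
  · have hx : x ∈ D.tri u := hu ▸ D.mem_piece x
    have hy : y ∈ D.tri u := hu ▸ hyx
    have h1 : (((D.tri u).erase x).erase y).card = 1 := by
      rw [Finset.card_erase_of_mem (Finset.mem_erase.2 ⟨hadj.ne.symm, hy⟩),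
        Finset.card_erase_of_mem hx, D.tri_card]
    obtain ⟨z, hz⟩ := Finset.card_eq_one.1 h1
    have hzz : z ∈ ((D.tri u).erase x).erase y := by rw [hz]; simp
    obtain ⟨hzy, hz'⟩ := Finset.mem_erase.1 hzz
    obtain ⟨hzx, hzS⟩ := Finset.mem_erase.1 hz'
    exact ⟨x, y, z, hadj, D.tri_adj u y hy z hzS (Ne.symm hzy),
      D.tri_adj u x hx z hzS (Ne.symm hzx), Set.mem_insert _ _⟩
  · have hx : x ∈ D.dia e i := hS ▸ D.mem_piece x
    have hy : y ∈ D.dia e i := hS ▸ hyx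
    obtain ⟨z, h1, h2⟩ := D.dia_edge_triangle he hi hx hy hadj
    exact ⟨x, y, z, hadj, h2, h1, Set.mem_insert _ _⟩

lemma mem_X_iff (hGcubic : ∀ v, G.degree v = 3) {X : Set (Sym2 VG)}
    (hX : X = {f | f ∈ G.edgeSet ∧ ¬ ∃ x y z : VG,
      G.Adj x y ∧ G.Adj y z ∧ G.Adj x z ∧
      f ∈ ({s(x, y), s(y, z), s(x, z)} : Set (Sym2 VG))})
    {x y : VG} (hadj : G.Adj x y) :
    s(x,y) ∈ X ↔ D.piece x ≠ D.piece y := by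
  subst hX
  simp only [Set.mem_setOf_eq]
  constructor
  · rintro ⟨-, hno⟩ hp
    exact hno (D.edge_triangle hadj hp)
  · intro hp
    refine ⟨G.mem_edgeSet.2 hadj, ?_⟩
    rintro ⟨a, b, c, h1, h2, h3, hm⟩
    have pab : D.piece a = D.piece b := D.triangle_same_piece hGcubic h1 h2 h3
    have pbc : D.piece b = D.piece c := D.triangle_same_piece hGcubic h2 h3.symm h1.symm
    simp only [Set.mem_insert_iff, Set.mem_singleton_iff, Sym2.eq_iff] at hm
    rcases hm with (⟨hx1, hy1⟩|⟨hx1, hy1⟩) | (⟨hx1, hy1⟩|⟨hx1, hy1⟩) | (⟨hx1, hy1⟩|⟨hx1, hy1⟩) <;>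
      subst hx1 <;> subst hy1
    · exact hp pab
    · exact hp pab.symm
    · exact hp pbc
    · exact hp pbc.symm
    · exact hp (pab.trans pbc)
    · exact hp (pab.trans pbc).symm

end DiamondInflation
set_option linter.unusedSectionVars false
namespace DiamondInflation
variable {VH VG : Type*} [Fintype VH] [Fintype VG] [DecidableEq VH] [DecidableEq VG]
  {H : SimpleGraph VH} {G : SimpleGraph VG} {k : Sym2 VH → ℕ}
  (D : DiamondInflation H G k) [DecidableRel G.Adj] {X : Set (Sym2 VG)}

lemma adj' (hXc : ∀ x y : VG, G.Adj x y → (s(x,y) ∈ X ↔ D.piece x ≠ D.piece y))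
    {x y : VG} (hadj : G.Adj x y) (hp : D.piece x = D.piece y) :
    (G.deleteEdges X).Adj x y :=
  SimpleGraph.deleteEdges_adj.2 ⟨hadj, fun h => ((hXc x y hadj).1 h) hp⟩

lemma reach_of_mem_piece (hXc : ∀ x y : VG, G.Adj x y → (s(x,y) ∈ X ↔ D.piece x ≠ D.piece y))
    {x y : VG} (hy : y ∈ D.piece x) : (G.deleteEdges X).Reachable x y := by
  have hpy : D.piece y = D.piece x := D.mem_piece_iff.1 hy
  by_cases hxy : x = y
  · subst hxy; exact SimpleGraph.Reachable.refl x
  rcases D.isPiece_piece x with ⟨u, hu⟩ | ⟨e, he, i, hi, hS⟩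
  · have hx : x ∈ D.tri u := hu ▸ D.mem_piece x
    have hy' : y ∈ D.tri u := hu ▸ hy
    exact (D.adj' hXc (D.tri_adj u x hx y hy' hxy) hpy.symm).reachable
  · have hx : x ∈ D.dia e i := hS ▸ D.mem_piece x
    have hy' : y ∈ D.dia e i := hS ▸ hy
    by_cases hadj : G.Adj x y
    · exact (D.adj' hXc hadj hpy.symm).reachable
    · have h2c : (((D.dia e i).erase x).erase y).card = 2 := by
        rw [Finset.card_erase_of_mem (Finset.mem_erase.2 ⟨fun h => hxy h.symm, hy'⟩),
          Finset.card_erase_of_mem hx, D.dia_card e he i hi]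
      obtain ⟨c, hcmem⟩ := Finset.card_pos.1 (by omega : 0 < (((D.dia e i).erase x).erase y).card)
      obtain ⟨hcy, hc'⟩ := Finset.mem_erase.1 hcmem
      obtain ⟨hcx, hcS⟩ := Finset.mem_erase.1 hc'
      have hxyE : s(x,y) ∉ G.edgeSet := fun hE => hadj (G.mem_edgeSet.1 hE)
      have hxc : s(x,c) ∈ G.edgeSet := by
        by_contra hmiss
        exact D.dia_no_two_missing he hi hx hy' hcS hxy (Ne.symm hcx) (Ne.symm hcy) hxyE hmiss
      have hyc : s(y,c) ∈ G.edgeSet := by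
        by_contra hmiss
        have hyxE : s(y,x) ∉ G.edgeSet := fun hE => hadj (G.mem_edgeSet.1 hE).symm
        exact D.dia_no_two_missing he hi hy' hcS hx (Ne.symm hcy) (fun h => hxy h.symm) hcx hmiss hyxE
      have hpc : D.piece c = D.dia e i := D.piece_dia he hi hcS
      have h1 : (G.deleteEdges X).Adj x c :=
        D.adj' hXc (G.mem_edgeSet.1 hxc) (hS.trans hpc.symm)
      have h2 : (G.deleteEdges X).Adj c y :=
        D.adj' hXc (G.mem_edgeSet.1 hyc).symm (hpc.trans (hpy.trans hS).symm)
      exact h1.reachable.trans h2.reachable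

lemma piece_eq_of_adj' (hXc : ∀ x y : VG, G.Adj x y → (s(x,y) ∈ X ↔ D.piece x ≠ D.piece y))
    {a b : VG} (h : (G.deleteEdges X).Adj a b) : D.piece a = D.piece b := by
  rw [SimpleGraph.deleteEdges_adj] at h
  by_contra hne
  exact h.2 ((hXc a b h.1).2 hne)

lemma piece_eq_of_walk (hXc : ∀ x y : VG, G.Adj x y → (s(x,y) ∈ X ↔ D.piece x ≠ D.piece y))
    {a b : VG} (w : (G.deleteEdges X).Walk a b) : D.piece a = D.piece b := by
  induction w with
  | nil => rfl
  | cons h _ ih => exact (D.piece_eq_of_adj' hXc h).trans ih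

lemma mk_eq_iff (hXc : ∀ x y : VG, G.Adj x y → (s(x,y) ∈ X ↔ D.piece x ≠ D.piece y))
    {x y : VG} :
    (G.deleteEdges X).connectedComponentMk x = (G.deleteEdges X).connectedComponentMk y
      ↔ D.piece x = D.piece y := by
  rw [SimpleGraph.ConnectedComponent.eq]
  constructor
  · intro h; exact h.elim (fun w => D.piece_eq_of_walk hXc w)
  · intro h; exact D.reach_of_mem_piece hXc (D.mem_piece_iff.2 h.symm)

lemma supp_eq (hXc : ∀ x y : VG, G.Adj x y → (s(x,y) ∈ X ↔ D.piece x ≠ D.piece y))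
    (x : VG) :
    ((G.deleteEdges X).connectedComponentMk x).supp = ↑(D.piece x) := by
  ext y
  rw [SimpleGraph.ConnectedComponent.mem_supp_iff, Finset.mem_coe, D.mem_piece_iff]
  exact D.mk_eq_iff hXc

lemma betti_tri (hXc : ∀ x y : VG, G.Adj x y → (s(x,y) ∈ X ↔ D.piece x ≠ D.piece y))
    {u : VH} {x : VG} (hx : x ∈ D.tri u) :
    compBetti (G.deleteEdges X) ((G.deleteEdges X).connectedComponentMk x) = 1 := by
  obtain ⟨p, q, r, hpq, hpr, hqr, hset⟩ := Finset.card_eq_three.1 (D.tri_card u)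
  have hpu : p ∈ D.tri u := by rw [hset]; simp
  have hqu : q ∈ D.tri u := by rw [hset]; simp
  have hru : r ∈ D.tri u := by rw [hset]; simp
  have hpiece : ∀ {w : VG}, w ∈ D.tri u → D.piece w = D.piece x :=
    fun hw => (D.piece_tri hw).trans (D.piece_tri hx).symm
  have hmk : ∀ {w : VG}, w ∈ D.tri u →
      (G.deleteEdges X).connectedComponentMk w = (G.deleteEdges X).connectedComponentMk x :=
    fun hw => (D.mk_eq_iff hXc).2 (hpiece hw)
  have hadj' : ∀ {a b : VG}, a ∈ D.tri u → b ∈ D.tri u → a ≠ b → (G.deleteEdges X).Adj a b :=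
    fun ha hb hab => D.adj' hXc (D.tri_adj u _ ha _ hb hab)
      ((hpiece ha).trans (hpiece hb).symm)
  have hE : {f | f ∈ (G.deleteEdges X).edgeSet ∧ ∀ v ∈ f,
      (G.deleteEdges X).connectedComponentMk v = (G.deleteEdges X).connectedComponentMk x}
      = ↑({s(p,q), s(p,r), s(q,r)} : Finset (Sym2 VG)) := by
    ext f
    simp only [Set.mem_setOf_eq, Finset.coe_insert, Finset.coe_singleton,
      Set.mem_insert_iff, Set.mem_singleton_iff]
    constructor
    · rintro ⟨hfE, hfc⟩
      induction f with
      | _ a b =>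
        have hga : G.Adj a b :=
          (SimpleGraph.deleteEdges_adj.1 ((G.deleteEdges X).mem_edgeSet.1 hfE)).1
        have ha : a ∈ D.tri u := by
          have h1 := (D.mk_eq_iff hXc).1 (hfc a (Sym2.mem_mk_left a b))
          have h2 : D.piece a = D.tri u := h1.trans (D.piece_tri hx)
          rw [← h2]; exact D.mem_piece a
        have hb : b ∈ D.tri u := by
          have h1 := (D.mk_eq_iff hXc).1 (hfc b (Sym2.mem_mk_right a b))
          have h2 : D.piece b = D.tri u := h1.trans (D.piece_tri hx)
          rw [← h2]; exact D.mem_piece b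
        rw [hset, Finset.mem_insert, Finset.mem_insert, Finset.mem_singleton] at ha hb
        rcases ha with rfl | rfl | rfl <;> rcases hb with rfl | rfl | rfl <;>
          first
            | exact absurd hga (G.irrefl)
            | simp [Sym2.eq_iff]
    · rintro (rfl | rfl | rfl)
      · refine ⟨(G.deleteEdges X).mem_edgeSet.2 (hadj' hpu hqu hpq), ?_⟩
        intro v hv
        rw [Sym2.mem_iff] at hv
        rcases hv with rfl | rfl
        exacts [hmk hpu, hmk hqu]
      · refine ⟨(G.deleteEdges X).mem_edgeSet.2 (hadj' hpu hru hpr), ?_⟩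
        intro v hv
        rw [Sym2.mem_iff] at hv
        rcases hv with rfl | rfl
        exacts [hmk hpu, hmk hru]
      · refine ⟨(G.deleteEdges X).mem_edgeSet.2 (hadj' hqu hru hqr), ?_⟩
        intro v hv
        rw [Sym2.mem_iff] at hv
        rcases hv with rfl | rfl
        exacts [hmk hqu, hmk hru]
  have hcard3 : ({s(p,q), s(p,r), s(q,r)} : Finset (Sym2 VG)).card = 3 := by
    rw [Finset.card_insert_of_notMem, Finset.card_insert_of_notMem, Finset.card_singleton]
    · simp only [Finset.mem_singleton]
      rw [Sym2.eq_iff]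
      rintro (⟨h, -⟩ | ⟨h, -⟩)
      · exact hpq h
      · exact hpr h
    · simp only [Finset.mem_insert, Finset.mem_singleton]
      rw [Sym2.eq_iff, Sym2.eq_iff]
      rintro ((⟨-, h⟩ | ⟨h, -⟩) | (⟨h, -⟩ | ⟨h, -⟩))
      exacts [hqr h, hpr h, hpq h, hpr h]
  rw [compBetti, hE, Set.ncard_coe_finset, hcard3, D.supp_eq hXc, D.piece_tri hx,
    Set.ncard_coe_finset, D.tri_card u]
  norm_num

lemma betti_dia (hXc : ∀ x y : VG, G.Adj x y → (s(x,y) ∈ X ↔ D.piece x ≠ D.piece y))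
    {e : Sym2 VH} {i : ℕ} (he : e ∈ H.edgeSet) (hi : i < k e)
    {x : VG} (hx : x ∈ D.dia e i) :
    compBetti (G.deleteEdges X) ((G.deleteEdges X).connectedComponentMk x) = 2 := by
  have hpx : D.piece x = D.dia e i := D.piece_dia he hi hx
  have hE : {f | f ∈ (G.deleteEdges X).edgeSet ∧ ∀ v ∈ f,
      (G.deleteEdges X).connectedComponentMk v = (G.deleteEdges X).connectedComponentMk x}
      = {f | f ∈ G.edgeSet ∧ ∀ v ∈ f, v ∈ (↑(D.dia e i) : Set VG)} := by
    ext f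
    simp only [Set.mem_setOf_eq]
    constructor
    · rintro ⟨hfE, hfc⟩
      rw [SimpleGraph.edgeSet_deleteEdges, Set.mem_diff] at hfE
      refine ⟨hfE.1, ?_⟩
      intro v hv
      have h1 := (D.mk_eq_iff hXc).1 (hfc v hv)
      have h2 : D.piece v = D.dia e i := h1.trans hpx
      rw [Finset.mem_coe, ← h2]
      exact D.mem_piece v
    · rintro ⟨hfE, hfS⟩
      induction f with
      | _ a b =>
        have hga : G.Adj a b := G.mem_edgeSet.1 hfE
        have ha : a ∈ D.dia e i := hfS a (Sym2.mem_mk_left a b)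
        have hb : b ∈ D.dia e i := hfS b (Sym2.mem_mk_right a b)
        have hpa : D.piece a = D.dia e i := D.piece_dia he hi ha
        have hpb : D.piece b = D.dia e i := D.piece_dia he hi hb
        refine ⟨(G.deleteEdges X).mem_edgeSet.2 (D.adj' hXc hga (hpa.trans hpb.symm)), ?_⟩
        intro v hv
        rw [Sym2.mem_iff] at hv
        rcases hv with rfl | rfl
        · exact (D.mk_eq_iff hXc).2 (hpa.trans hpx.symm)
        · exact (D.mk_eq_iff hXc).2 (hpb.trans hpx.symm)
  rw [compBetti, hE, D.dia_edges e he i hi, D.supp_eq hXc, hpx,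
    Set.ncard_coe_finset, D.dia_card e he i hi]
  norm_num

end DiamondInflation

/-- For `G` obtained from a 2-edge-connected cubic graph `H` on `n` vertices by inflating
every vertex to a triangle and replacing each edge by a string of diamonds of positive
length: if Nebeský's inequality `ec(G−X) + 2·oc(G−X) − 2 ≤ |X|` holds for the set `X` of
edges of `G` on no triangle, then `n ≤ 4`. -/
theorem stmt15 {VH VG : Type*} [Fintype VH] [Fintype VG]
    [DecidableEq VH] [DecidableEq VG]
    (H : SimpleGraph VH) (G : SimpleGraph VG)
    [DecidableRel H.Adj] [DecidableRel G.Adj]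
    (hHconn : H.Connected) (hHcubic : ∀ v, H.degree v = 3)
    (hH2ec : ∀ f ∈ H.edgeFinset, (H.deleteEdges {f}).Connected)
    (hGconn : G.Connected) (hGcubic : ∀ v, G.degree v = 3)
    (k : Sym2 VH → ℕ) (hk : ∀ e ∈ H.edgeSet, 1 ≤ k e)
    (D : DiamondInflation H G k)
    (X : Set (Sym2 VG))
    (hX : X = {f | f ∈ G.edgeSet ∧ ¬ ∃ x y z : VG,
      G.Adj x y ∧ G.Adj y z ∧ G.Adj x z ∧
      f ∈ ({s(x, y), s(y, z), s(x, z)} : Set (Sym2 VG))})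
    (hNeb : ({c : (G.deleteEdges X).ConnectedComponent |
        Even (compBetti (G.deleteEdges X) c)}.ncard : ℤ)
      + 2 * ({c : (G.deleteEdges X).ConnectedComponent |
        Odd (compBetti (G.deleteEdges X) c)}.ncard : ℤ) - 2 ≤ (X.ncard : ℤ)) :
    Fintype.card VH ≤ 4 := by
  classical
  rcases Nat.eq_zero_or_pos (Fintype.card VH) with h0 | hpos
  · omega
  have hXc : ∀ x y : VG, G.Adj x y → (s(x,y) ∈ X ↔ D.piece x ≠ D.piece y) :=
    fun x y hadj => D.mem_X_iff hGcubic hX hadj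
  -- handshake for H
  have hm : 2 * H.edgeFinset.card = 3 * Fintype.card VH := by
    have hs := H.sum_degrees_eq_twice_card_edges
    simp only [hHcubic, Finset.sum_const, smul_eq_mul, mul_comm, Finset.card_univ] at hs
    omega
  -- representatives of triangles
  have hrepex : ∀ u : VH, ∃ x, x ∈ D.tri u := fun u =>
    Finset.card_pos.1 (by rw [D.tri_card]; omega)
  choose rep hrep using hrepex
  -- odd components: at least n of them
  have hOdd : Fintype.card VH ≤ {c : (G.deleteEdges X).ConnectedComponent |
      Odd (compBetti (G.deleteEdges X) c)}.ncard := by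
    have hfin : {c : (G.deleteEdges X).ConnectedComponent |
        Odd (compBetti (G.deleteEdges X) c)}.Finite := Set.toFinite _
    have hinj : Function.Injective
        (fun u => (G.deleteEdges X).connectedComponentMk (rep u)) := by
      intro u u' h
      have hpp := (D.mk_eq_iff hXc).1 h
      by_contra hne
      rw [D.piece_tri (hrep u), D.piece_tri (hrep u')] at hpp
      exact Finset.disjoint_left.1 (D.tri_disj u u' hne) (hrep u) (hpp ▸ hrep u)
    have hsub : Set.range (fun u => (G.deleteEdges X).connectedComponentMk (rep u))
        ⊆ {c | Odd (compBetti (G.deleteEdges X) c)} := by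
      rintro c ⟨u, rfl⟩
      simp only [Set.mem_setOf_eq]
      rw [D.betti_tri hXc (hrep u)]
      exact odd_one
    calc Fintype.card VH = (Set.univ : Set VH).ncard := by
          rw [Set.ncard_univ, Nat.card_eq_fintype_card]
      _ = ((fun u => (G.deleteEdges X).connectedComponentMk (rep u)) '' Set.univ).ncard :=
          (Set.ncard_image_of_injective _ hinj).symm
      _ ≤ _ := Set.ncard_le_ncard (by rw [Set.image_univ]; exact hsub) hfin
  -- even components: at least K of them
  have hEven : ∑ e ∈ H.edgeFinset, k e ≤ {c : (G.deleteEdges X).ConnectedComponent |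
      Even (compBetti (G.deleteEdges X) c)}.ncard := by
    have hfin : {c : (G.deleteEdges X).ConnectedComponent |
        Even (compBetti (G.deleteEdges X) c)}.Finite := Set.toFinite _
    obtain ⟨u0⟩ : Nonempty VH := Fintype.card_pos_iff.1 hpos
    set Sg : Finset ((_ : Sym2 VH) × ℕ) := H.edgeFinset.sigma (fun e => Finset.range (k e))
      with hSg
    have hmemSg : ∀ p ∈ Sg, p.1 ∈ H.edgeSet ∧ p.2 < k p.1 := by
      intro p hp
      rw [hSg, Finset.mem_sigma, Finset.mem_range] at hp
      exact ⟨SimpleGraph.mem_edgeFinset.1 hp.1, hp.2⟩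
    set fe : ((_ : Sym2 VH) × ℕ) → (G.deleteEdges X).ConnectedComponent := fun p =>
      if h : (D.dia p.1 p.2).Nonempty then (G.deleteEdges X).connectedComponentMk h.choose
      else (G.deleteEdges X).connectedComponentMk (rep u0) with hfe
    have hdne : ∀ p ∈ Sg, (D.dia p.1 p.2).Nonempty := by
      intro p hp
      obtain ⟨h1, h2⟩ := hmemSg p hp
      exact Finset.card_pos.1 (by rw [D.dia_card p.1 h1 p.2 h2]; omega)
    have hfeval : ∀ p (h : (D.dia p.1 p.2).Nonempty),
        fe p = (G.deleteEdges X).connectedComponentMk h.choose := by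
      intro p h
      rw [hfe]
      simp only [h, dif_pos]
    have hmem : ∀ p ∈ Sg, fe p ∈ hfin.toFinset := by
      intro p hp
      obtain ⟨h1, h2⟩ := hmemSg p hp
      have h := hdne p hp
      rw [hfeval p h, hfin.mem_toFinset]
      simp only [Set.mem_setOf_eq]
      rw [D.betti_dia hXc h1 h2 h.choose_spec]
      exact even_two
    have hinj : Set.InjOn fe ↑Sg := by
      intro p hp q hq hfeq
      obtain ⟨hp1, hp2⟩ := hmemSg p (Finset.mem_coe.1 hp)
      obtain ⟨hq1, hq2⟩ := hmemSg q (Finset.mem_coe.1 hq)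
      have hdp := hdne p (Finset.mem_coe.1 hp)
      have hdq := hdne q (Finset.mem_coe.1 hq)
      rw [hfeval p hdp, hfeval q hdq] at hfeq
      have hpp := (D.mk_eq_iff hXc).1 hfeq
      rw [D.piece_dia hp1 hp2 hdp.choose_spec, D.piece_dia hq1 hq2 hdq.choose_spec] at hpp
      by_contra hne
      have hor : p.1 ≠ q.1 ∨ p.2 ≠ q.2 := by
        by_contra hc
        push_neg at hc
        exact hne (Sigma.ext hc.1 (heq_of_eq hc.2))
      exact Finset.disjoint_left.1 (D.dia_disj p.1 hp1 q.1 hq1 p.2 hp2 q.2 hq2 hor)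
        hdp.choose_spec (hpp ▸ hdp.choose_spec)
    have hcards := Finset.card_le_card_of_injOn fe hmem hinj
    have hSgcard : Sg.card = ∑ e ∈ H.edgeFinset, k e := by
      rw [hSg, Finset.card_sigma]
      exact Finset.sum_congr rfl (fun e _ => Finset.card_range _)
    rw [hSgcard] at hcards
    rwa [Set.ncard_eq_toFinset_card _ hfin]
  -- upper bound on |X|
  have hXb : X.ncard ≤ (∑ e ∈ H.edgeFinset, k e) + H.edgeFinset.card := by
    have hsub : X ⊆ ↑(H.edgeFinset.biUnion D.cross) := by
      intro f hf
      rw [hX, Set.mem_setOf_eq] at hf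
      obtain ⟨hfE, hno⟩ := hf
      rcases D.edge_classify f hfE with ⟨u, hu⟩ | ⟨e, he, i, hi, hd⟩ | ⟨e, ⟨heH, hce⟩, -⟩
      · exfalso
        induction f with
        | _ a b =>
          have hga : G.Adj a b := G.mem_edgeSet.1 hfE
          have ha := hu a (Sym2.mem_mk_left a b)
          have hb := hu b (Sym2.mem_mk_right a b)
          exact hno (D.edge_triangle hga ((D.piece_tri ha).trans (D.piece_tri hb).symm))
      · exfalso
        induction f with
        | _ a b =>
          have hga : G.Adj a b := G.mem_edgeSet.1 hfE
          have ha := hd a (Sym2.mem_mk_left a b)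
          have hb := hd b (Sym2.mem_mk_right a b)
          exact hno (D.edge_triangle hga
            ((D.piece_dia he hi ha).trans (D.piece_dia he hi hb).symm))
      · exact Finset.mem_coe.2
          (Finset.mem_biUnion.2 ⟨e, SimpleGraph.mem_edgeFinset.2 heH, hce⟩)
    calc X.ncard ≤ (H.edgeFinset.biUnion D.cross).card := by
          rw [← Set.ncard_coe_finset]
          exact Set.ncard_le_ncard hsub (Set.toFinite _)
      _ ≤ ∑ e ∈ H.edgeFinset, (D.cross e).card := Finset.card_biUnion_le
      _ = ∑ e ∈ H.edgeFinset, (k e + 1) :=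
          Finset.sum_congr rfl (fun e he => D.cross_card e (SimpleGraph.mem_edgeFinset.1 he))
      _ = (∑ e ∈ H.edgeFinset, k e) + H.edgeFinset.card := by
          rw [Finset.sum_add_distrib, Finset.sum_const, smul_eq_mul, mul_one]
  omega
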